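/- Let X be a metric space, ε > 0, and suppose Y ⊆ X is ε-dense in X (every point of X is within distance ε of Y). If Z ⊆ X is another subset such that Z is ε'-dense in X, and both Y and Z with the induced metrics are non-amenable UDBG spaces, then Y and Z are bi-Lipschitz equivalent. -/
import Mathlib

/-- Uniform discreteness. -/
def UniformlyDiscrete (X : Type*) [MetricSpace X] : Prop :=
  ∃ ε > (0 : ℝ), ∀ x y : X, x ≠ y → ε ≤ dist x y

/-- Bounded geometry. -/
def BoundedGeometry (X : Type*) [MetricSpace X] : Prop :=
  ∀ R : ℝ, 0 < R → ∃ C : ℕ, ∀ x : X,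
    (Metric.closedBall x R).Finite ∧ (Metric.closedBall x R).ncard ≤ C

/-- The `R`-boundary of a subset `S`. -/
def rBoundary {X : Type*} [MetricSpace X] (S : Set X) (R : ℝ) : Set X :=
  {x | x ∉ S ∧ ∃ y ∈ S, dist x y ≤ R}

/-- A Følner sequence. -/
def IsFolnerSeq {X : Type*} [MetricSpace X] (Fs : ℕ → Set X) : Prop :=
  (∀ n, (Fs n).Finite ∧ (Fs n).Nonempty) ∧
  ∀ R : ℝ, 0 < R →
    Filter.Tendsto
      (fun n => ((rBoundary (Fs n) R).ncard : ℝ) / ((Fs n).ncard : ℝ))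
      Filter.atTop (nhds 0)

/-- Non-amenability: no Følner sequence exists. -/
def NonAmenable (X : Type*) [MetricSpace X] : Prop :=
  ¬ ∃ Fs : ℕ → Set X, IsFolnerSeq Fs

namespace BLX

open Set Metric

variable {W : Type*} [MetricSpace W]

/-- The closed `r`-neighborhood of a set. -/
def nbhd (S : Set W) (r : ℝ) : Set W := {x | ∃ y ∈ S, dist x y ≤ r}

lemma subset_nbhd {S : Set W} {r : ℝ} (hr : 0 ≤ r) : S ⊆ nbhd S r := by
  intro x hx; exact ⟨x, hx, by simpa using hr⟩

lemma nbhd_finite (hbg : BoundedGeometry W) {S : Set W} (hS : S.Finite) (r : ℝ) :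
    (nbhd S r).Finite := by
  have hr1 : (0:ℝ) < max r 1 := lt_of_lt_of_le one_pos (le_max_right _ _)
  obtain ⟨C, hC⟩ := hbg (max r 1) hr1
  have hsub : nbhd S r ⊆ ⋃ y ∈ S, Metric.closedBall y (max r 1) := by
    rintro x ⟨y, hy, hxy⟩
    exact Set.mem_biUnion hy (by simpa [Metric.mem_closedBall] using hxy.trans (le_max_left _ _))
  exact ((hS.biUnion (fun y _ => (hC y).1)).subset hsub)

lemma rBoundary_subset_nbhd (S : Set W) (R : ℝ) : rBoundary S R ⊆ nbhd S R := by
  rintro x ⟨-, hx⟩; exact hx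

lemma nbhd_eq_union (S : Set W) {R : ℝ} (hR : 0 ≤ R) :
    nbhd S R = S ∪ rBoundary S R := by
  ext x
  constructor
  · rintro ⟨y, hy, hxy⟩
    by_cases hxS : x ∈ S
    · exact Or.inl hxS
    · exact Or.inr ⟨hxS, y, hy, hxy⟩
  · rintro (hx | ⟨-, hx⟩)
    · exact subset_nbhd hR hx
    · exact hx

lemma exists_expansion (hbg : BoundedGeometry W) (hna : NonAmenable W) :
    ∃ R c : ℝ, 1 ≤ R ∧ 0 < c ∧
      ∀ S : Set W, S.Finite → c * S.ncard ≤ ((rBoundary S R).ncard : ℝ) := by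
  by_contra hcon
  push_neg at hcon
  apply hna
  have h : ∀ n : ℕ, ∃ S : Set W, S.Finite ∧
      ((rBoundary S ((n:ℝ)+1)).ncard : ℝ) < (S.ncard : ℝ) / ((n:ℝ)+1) := by
    intro n
    have hn1 : (0:ℝ) < (n:ℝ)+1 := by positivity
    obtain ⟨S, hSf, hS⟩ := hcon ((n:ℝ)+1) (1/((n:ℝ)+1))
      (by simp [le_add_iff_nonneg_left, n.cast_nonneg]) (by positivity)
    exact ⟨S, hSf, by rw [div_eq_inv_mul, ← one_div]; exact hS⟩
  choose Fs hFsf hFs using h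
  have hne : ∀ n, (Fs n).Nonempty := by
    intro n
    rcases Set.eq_empty_or_nonempty (Fs n) with h | h
    · exfalso; have := hFs n; rw [h] at this; simp at this
      exact absurd this (not_lt.mpr (Nat.cast_nonneg _))
    · exact h
  have hpos : ∀ n, (0:ℝ) < ((Fs n).ncard : ℝ) := by
    intro n
    have := (Set.ncard_pos (hFsf n)).mpr (hne n)
    exact_mod_cast this
  refine ⟨Fs, ⟨fun n => ⟨hFsf n, hne n⟩, ?_⟩⟩
  intro R hR
  have key : ∀ n : ℕ, (R ≤ (n:ℝ)+1) →
      ((rBoundary (Fs n) R).ncard : ℝ) / ((Fs n).ncard : ℝ) ≤ 1/((n:ℝ)+1) := by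
    intro n hn
    have hsub : rBoundary (Fs n) R ⊆ rBoundary (Fs n) ((n:ℝ)+1) := by
      rintro x ⟨hx1, y, hy, hxy⟩
      exact ⟨hx1, y, hy, hxy.trans hn⟩
    have hfin : (rBoundary (Fs n) ((n:ℝ)+1)).Finite :=
      (nbhd_finite hbg (hFsf n) _).subset (rBoundary_subset_nbhd _ _)
    have h1 : ((rBoundary (Fs n) R).ncard : ℝ) ≤ ((rBoundary (Fs n) ((n:ℝ)+1)).ncard : ℝ) := by
      exact_mod_cast Nat.cast_le.mpr (Set.ncard_le_ncard hsub hfin)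
    have h2 := (hFs n)
    rw [div_le_iff₀ (hpos n), one_div]
    have := h1.trans h2.le
    rwa [div_eq_inv_mul] at this
  have hsq : ∀ᶠ n in Filter.atTop,
      ((rBoundary (Fs n) R).ncard : ℝ) / ((Fs n).ncard : ℝ) ≤ 1/((n:ℝ)+1) := by
    filter_upwards [Filter.eventually_ge_atTop ⌈R⌉₊] with n hn
    refine key n ?_
    calc R ≤ (⌈R⌉₊ : ℝ) := Nat.le_ceil R
    _ ≤ (n:ℝ) := by exact_mod_cast hn
    _ ≤ (n:ℝ)+1 := by linarith
  refine squeeze_zero' ?_ hsq ?_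
  · filter_upwards with n; positivity
  · exact tendsto_one_div_add_atTop_nhds_zero_nat

lemma nbhd_growth (hbg : BoundedGeometry W) {R c : ℝ} (hR : 1 ≤ R) (hc : 0 < c)
    (hexp : ∀ S : Set W, S.Finite → c * S.ncard ≤ ((rBoundary S R).ncard : ℝ)) :
    ∀ k : ℕ, ∀ S : Set W, S.Finite →
      (1 + c) ^ k * S.ncard ≤ ((nbhd S ((k : ℝ) * R)).ncard : ℝ) := by
  have hR0 : (0:ℝ) ≤ R := by linarith
  intro k
  induction k with
  | zero =>
    intro S hS
    simp only [Nat.cast_zero, pow_zero, one_mul, zero_mul]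
    exact_mod_cast Set.ncard_le_ncard (subset_nbhd le_rfl) (nbhd_finite hbg hS 0)
  | succ k ih =>
    intro S hS
    set T := nbhd S ((k : ℝ) * R) with hTdef
    have hT : T.Finite := nbhd_finite hbg hS _
    have hTB : (rBoundary T R).Finite :=
      (nbhd_finite hbg hT R).subset (rBoundary_subset_nbhd _ _)
    have hdisj : Disjoint T (rBoundary T R) := by
      rw [Set.disjoint_left]; rintro x hx ⟨hx', -⟩; exact hx' hx
    have hcard : ((nbhd T R).ncard : ℝ) = T.ncard + (rBoundary T R).ncard := by
      rw [nbhd_eq_union T hR0, Set.ncard_union_eq hdisj hT hTB]; push_cast; ring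
    have step1 : (1 + c) * (T.ncard : ℝ) ≤ ((nbhd T R).ncard : ℝ) := by
      have := hexp T hT
      rw [hcard]; nlinarith
    have step2 : nbhd T R ⊆ nbhd S (((k : ℕ) + 1 : ℝ) * R) := by
      rintro x ⟨y, ⟨s, hs, hys⟩, hxy⟩
      exact ⟨s, hs, by nlinarith [dist_triangle x y s]⟩
    have hfin2 : (nbhd S (((k : ℕ) + 1 : ℝ) * R)).Finite := nbhd_finite hbg hS _
    have step3 : ((nbhd T R).ncard : ℝ) ≤ ((nbhd S (((k : ℕ) + 1 : ℝ) * R)).ncard : ℝ) := by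
      exact_mod_cast Set.ncard_le_ncard step2 hfin2
    have hih := ih S hS
    have h1c : (0:ℝ) < 1 + c := by linarith
    calc (1 + c) ^ (k+1) * (S.ncard : ℝ) = (1 + c) * ((1 + c) ^ k * S.ncard) := by ring
    _ ≤ (1 + c) * (T.ncard : ℝ) := by nlinarith
    _ ≤ ((nbhd T R).ncard : ℝ) := step1
    _ ≤ _ := by push_cast; exact_mod_cast step3

end BLX

section Ambient

open Set Metric BLX

variable {X : Type*} [MetricSpace X]

lemma ball_count (Y : Set X) {ε : ℝ}
    (hYdense : ∀ x : X, ∃ y ∈ Y, dist x y ≤ ε) (hYbg : BoundedGeometry Y)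
    (r : ℝ) :
    ∃ C : ℕ, 0 < C ∧ ∀ x : X,
      ({y : Y | dist (y : X) x ≤ r}).Finite ∧
      ({y : Y | dist (y : X) x ≤ r}).ncard ≤ C := by
  have hrad : (0:ℝ) < max (r + ε) 1 := lt_of_lt_of_le one_pos (le_max_right _ _)
  obtain ⟨C, hC⟩ := hYbg (max (r + ε) 1) hrad
  refine ⟨C + 1, Nat.succ_pos _, fun x => ?_⟩
  obtain ⟨y₀, hy₀Y, hy₀⟩ := hYdense x
  have hsub : {y : Y | dist (y : X) x ≤ r} ⊆
      Metric.closedBall (⟨y₀, hy₀Y⟩ : Y) (max (r + ε) 1) := by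
    intro y hy
    simp only [Metric.mem_closedBall, Subtype.dist_eq]
    calc dist (y : X) y₀ ≤ dist (y : X) x + dist x y₀ := dist_triangle _ _ _
    _ ≤ r + ε := add_le_add hy hy₀
    _ ≤ max (r + ε) 1 := le_max_left _ _
  have h1 := (hC (⟨y₀, hy₀Y⟩ : Y)).1
  exact ⟨h1.subset hsub, le_trans (Set.ncard_le_ncard hsub h1)
    (le_trans (hC _).2 (Nat.le_succ _))⟩

lemma exists_injection (Y Z : Set X) (ε ε' : ℝ) (hε : 0 < ε) (hε' : 0 < ε')
    (hYdense : ∀ x : X, ∃ y ∈ Y, dist x y ≤ ε)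
    (hZdense : ∀ x : X, ∃ z ∈ Z, dist x z ≤ ε')
    (hYbg : BoundedGeometry Y) (hZbg : BoundedGeometry Z)
    (hYna : NonAmenable Y) :
    ∃ D : ℝ, 0 < D ∧ ∃ f : Y → Z, Function.Injective f ∧
      ∀ y : Y, dist (y : X) (f y : X) ≤ D := by
  classical
  obtain ⟨R, c, hR, hc, hexp⟩ := exists_expansion (W := Y) hYbg hYna
  -- fibre bound: points of Y that are ε'-close to a given ambient point
  obtain ⟨C, hCpos, hC⟩ := ball_count Y hYdense hYbg ε'
  -- choose k with C < (1+c)^k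
  obtain ⟨k, hk⟩ := pow_unbounded_of_one_lt (C : ℝ) (by linarith : (1:ℝ) < 1 + c)
  set D : ℝ := (k : ℝ) * R + ε' with hD
  have hD0 : 0 < D := by
    have : (0:ℝ) ≤ (k : ℝ) * R := by positivity
    linarith
  -- neighbour finsets in Z
  obtain ⟨C', hC'pos, hC'⟩ := ball_count Z hZdense hZbg D
  let t : Y → Finset Z := fun y => ((hC' (y : X)).1).toFinset
  have ht : ∀ (y : Y) (z : Z), z ∈ t y ↔ dist (z : X) (y : X) ≤ D := by
    intro y z
    simp [t, Set.Finite.mem_toFinset]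
  -- the choice map Y → Z moving points at most ε'
  have hch : ∀ y : Y, ∃ z : Z, dist (y : X) (z : X) ≤ ε' := by
    intro y
    obtain ⟨z, hzZ, hz⟩ := hZdense (y : X)
    exact ⟨⟨z, hzZ⟩, hz⟩
  choose φ hφ using hch
  -- Hall's condition
  have hall : ∀ A : Finset Y, A.card ≤ (A.biUnion t).card := by
    intro A
    set S : Set Y := (A : Set Y) with hSdef
    have hSfin : S.Finite := A.finite_toSet
    have hgrow := nbhd_growth (W := Y) hYbg hR hc hexp k S hSfin
    set N : Set Y := nbhd S ((k : ℝ) * R) with hNdef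
    have hNfin : N.Finite := nbhd_finite hYbg hSfin _
    set NF : Finset Y := hNfin.toFinset with hNF
    have hNcard : (N.ncard : ℝ) = (NF.card : ℝ) := by
      rw [Set.ncard_eq_toFinset_card N hNfin]
    -- each fibre of φ on NF has size at most C
    have hfib : ∀ z ∈ NF.image φ, (NF.filter (fun y => φ y = z)).card ≤ C := by
      intro z _
      have hsub : ((NF.filter (fun y => φ y = z)) : Set Y) ⊆
          {y : Y | dist (y : X) (z : X) ≤ ε'} := by
        intro y hy
        simp only [Finset.coe_filter, Set.mem_setOf_eq] at hy
        obtain ⟨-, hyz⟩ := hy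
        rw [Set.mem_setOf_eq, ← hyz]
        exact hφ y
      have := Set.ncard_le_ncard hsub (hC (z : X)).1
      rw [Set.ncard_coe_finset] at this
      exact le_trans this (hC (z : X)).2
    have hcount : NF.card ≤ C * (NF.image φ).card :=
      Finset.card_le_mul_card_image NF C hfib
    -- the image of NF under φ is contained in the Hall neighbourhood
    have himg : NF.image φ ⊆ A.biUnion t := by
      intro z hz
      obtain ⟨y, hyN, hyz⟩ := Finset.mem_image.mp hz
      rw [hNF, Set.Finite.mem_toFinset] at hyN
      obtain ⟨a, haS, hya⟩ := hyN
      refine Finset.mem_biUnion.mpr ⟨a, haS, ?_⟩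
      rw [ht]
      have h1 : dist (z : X) (y : X) ≤ ε' := by rw [← hyz]; exact dist_comm (y : X) _ ▸ (hφ y)
      have h2 : dist (y : X) (a : X) ≤ (k : ℝ) * R := by
        rwa [Subtype.dist_eq] at hya
      calc dist (z : X) (a : X) ≤ dist (z : X) (y : X) + dist (y : X) (a : X) :=
        dist_triangle _ _ _
      _ ≤ ε' + (k : ℝ) * R := add_le_add h1 h2
      _ = D := by rw [hD]; ring
    -- put everything together over ℝ
    have hScard : (S.ncard : ℝ) = (A.card : ℝ) := by rw [hSdef, Set.ncard_coe_finset]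
    have main : (C : ℝ) * A.card ≤ (C : ℝ) * ((NF.image φ).card : ℝ) := by
      have e1 : (C : ℝ) * A.card ≤ (1 + c) ^ k * A.card := by
        have : (0:ℝ) ≤ (A.card : ℝ) := Nat.cast_nonneg _
        nlinarith
      have e2 : ((N.ncard : ℝ)) ≤ (C : ℝ) * ((NF.image φ).card : ℝ) := by
        rw [hNcard]
        exact_mod_cast hcount
      calc (C : ℝ) * A.card ≤ (1 + c) ^ k * A.card := e1
      _ = (1 + c) ^ k * (S.ncard : ℝ) := by rw [hScard]
      _ ≤ (N.ncard : ℝ) := hgrow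
      _ ≤ _ := e2
    have hAle : (A.card : ℝ) ≤ ((NF.image φ).card : ℝ) :=
      le_of_mul_le_mul_left main (by exact_mod_cast hCpos)
    have : A.card ≤ (NF.image φ).card := by exact_mod_cast hAle
    exact le_trans this (Finset.card_le_card himg)
  obtain ⟨f, hfinj, hft⟩ := (Finset.all_card_le_biUnion_card_iff_exists_injective t).mp hall
  refine ⟨D, hD0, f, hfinj, fun y => ?_⟩
  have := (ht y (f y)).mp (hft y)
  rwa [dist_comm] at this

end Ambient

lemma csb_matching {α β : Type*} (f : α → β) (g : β → α)
    (hf : Function.Injective f) (hg : Function.Injective g) :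
    ∃ h : α → β, Function.Bijective h ∧ ∀ a, h a = f a ∨ g (h a) = a := by
  classical
  set A : Set α := ⋃ n : ℕ, (g ∘ f)^[n] '' (Set.range g)ᶜ with hA
  have h0 : (Set.range g)ᶜ ⊆ A := by
    intro a ha
    exact Set.mem_iUnion.mpr ⟨0, by simpa using ha⟩
  have hstep : ∀ a ∈ A, g (f a) ∈ A := by
    intro a ha
    obtain ⟨n, x, hx, hxa⟩ : ∃ n, ∃ x ∈ (Set.range g)ᶜ, (g ∘ f)^[n] x = a := by
      simpa [hA, Set.mem_iUnion] using ha
    refine Set.mem_iUnion.mpr ⟨n + 1, ⟨x, hx, ?_⟩⟩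
    rw [Function.iterate_succ_apply', hxa]
    rfl
  have hmem : ∀ a, a ∉ A → ∃ b, g b = a := by
    intro a ha
    by_contra hb
    push_neg at hb
    exact ha (h0 (by simpa [Set.mem_range] using hb))
  let h : α → β := fun a => if hMem : a ∈ A then f a else Classical.choose (hmem a hMem)
  have hhf : ∀ a ∈ A, h a = f a := fun a ha => dif_pos ha
  have hgh : ∀ a, a ∉ A → g (h a) = a := by
    intro a ha
    simp only [h, dif_neg ha]
    exact Classical.choose_spec (hmem a ha)
  have hinj : Function.Injective h := by
    intro a a' he
    by_cases ha : a ∈ A <;> by_cases ha' : a' ∈ A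
    · rw [hhf a ha, hhf a' ha'] at he; exact hf he
    · exfalso
      rw [hhf a ha] at he
      have : a' = g (f a) := by rw [he, hgh a' ha']
      exact ha' (this ▸ hstep a ha)
    · exfalso
      rw [hhf a' ha'] at he
      have : a = g (f a') := by rw [← he, hgh a ha]
      exact ha (this ▸ hstep a' ha')
    · rw [← hgh a ha, ← hgh a' ha', he]
  have hsurj : Function.Surjective h := by
    intro b
    by_cases hgb : g b ∈ A
    · obtain ⟨n, x, hx, hxa⟩ : ∃ n, ∃ x ∈ (Set.range g)ᶜ, (g ∘ f)^[n] x = g b := by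
        simpa [hA, Set.mem_iUnion] using hgb
      cases n with
      | zero =>
        exfalso
        simp only [Function.iterate_zero, id_eq] at hxa
        exact hx ⟨b, hxa.symm⟩
      | succ n =>
        rw [Function.iterate_succ_apply'] at hxa
        set a : α := (g ∘ f)^[n] x with ha
        have haA : a ∈ A := Set.mem_iUnion.mpr ⟨n, ⟨x, hx, rfl⟩⟩
        have : f a = b := hg hxa
        exact ⟨a, by rw [hhf a haA, this]⟩
    · exact ⟨g b, hg (hgh (g b) hgb)⟩
  refine ⟨h, ⟨hinj, hsurj⟩, fun a => ?_⟩
  by_cases ha : a ∈ A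
  · exact Or.inl (hhf a ha)
  · exact Or.inr (hgh a ha)

/-- If `Y` and `Z` are coarsely dense subsets of a common metric
space `X` (`Y` is `ε`-dense and `Z` is `ε'`-dense) and both, with the induced
metrics, are non-amenable UDBG spaces, then `Y` and `Z` are bi-Lipschitz
equivalent. -/
theorem dense_nonamenable_UDBG_subsets_biLipschitz
    {X : Type*} [MetricSpace X] (Y Z : Set X) (ε ε' : ℝ)
    (hε : 0 < ε) (hε' : 0 < ε')
    (hYdense : ∀ x : X, ∃ y ∈ Y, dist x y ≤ ε)
    (hZdense : ∀ x : X, ∃ z ∈ Z, dist x z ≤ ε')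
    (hYud : UniformlyDiscrete Y) (hYbg : BoundedGeometry Y)
    (hYna : NonAmenable Y)
    (hZud : UniformlyDiscrete Z) (hZbg : BoundedGeometry Z)
    (hZna : NonAmenable Z) :
    ∃ f : Y → Z, Function.Bijective f ∧
      ∃ K ≥ (1 : ℝ), ∀ a b : Y,
        dist a b / K ≤ dist (f a) (f b) ∧ dist (f a) (f b) ≤ K * dist a b := by
  classical
  rcases isEmpty_or_nonempty X with hX | hX
  · haveI : IsEmpty Y := ⟨fun y => IsEmpty.false (y : X)⟩
    haveI : IsEmpty Z := ⟨fun z => IsEmpty.false (z : X)⟩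
    exact ⟨fun y => isEmptyElim y,
      ⟨fun a => isEmptyElim a, fun z => isEmptyElim z⟩,
      1, le_refl 1, fun a b => isEmptyElim a⟩
  · obtain ⟨D, hD0, f, hfinj, hfd⟩ :=
      exists_injection Y Z ε ε' hε hε' hYdense hZdense hYbg hZbg hYna
    obtain ⟨D', hD'0, g, hginj, hgd⟩ :=
      exists_injection Z Y ε' ε hε' hε hZdense hYdense hZbg hYbg hZna
    obtain ⟨h, hbij, hh⟩ := csb_matching f g hfinj hginj
    set M : ℝ := max D D' with hMdef
    have hM0 : (0:ℝ) < M := lt_of_lt_of_le hD0 (le_max_left _ _)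
    have hM : ∀ y : Y, dist (y : X) (h y : X) ≤ M := by
      intro y
      rcases hh y with h1 | h2
      · rw [h1]; exact (hfd y).trans (le_max_left _ _)
      · have := hgd (h y)
        rw [h2] at this
        rw [dist_comm]
        exact this.trans (le_max_right _ _)
    obtain ⟨δY, hδY, hYsep⟩ := hYud
    obtain ⟨δZ, hδZ, hZsep⟩ := hZud
    set δ : ℝ := min δY δZ with hδdef
    have hδ : 0 < δ := lt_min hδY hδZ
    set L : ℝ := 2 * M / δ with hLdef
    have hL0 : 0 ≤ L := by positivity
    have hLδ : L * δ = 2 * M := div_mul_cancel₀ _ (ne_of_gt hδ)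
    set K : ℝ := 1 + L with hKdef
    have hK1 : (1:ℝ) ≤ K := by linarith
    have hK0 : (0:ℝ) < K := by linarith
    refine ⟨h, hbij, K, hK1, fun a b => ?_⟩
    by_cases hab : a = b
    · subst hab
      simp [dist_self]
    · have hsepab : δ ≤ dist a b := le_trans (min_le_left _ _) (hYsep a b hab)
      have hne : h a ≠ h b := fun e => hab (hbij.1 e)
      have hsepim : δ ≤ dist (h a) (h b) := le_trans (min_le_right _ _) (hZsep _ _ hne)
      have hda : dist a b = dist (a : X) (b : X) := Subtype.dist_eq a b
      have hdh : dist (h a) (h b) = dist ((h a) : X) ((h b) : X) := Subtype.dist_eq _ _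
      have tri1 : dist ((h a) : X) ((h b) : X) ≤ dist (a : X) (b : X) + 2 * M := by
        have t1 := dist_triangle ((h a) : X) (a : X) ((h b) : X)
        have t2 := dist_triangle (a : X) (b : X) ((h b) : X)
        have m1 := hM a
        have m2 := hM b
        rw [dist_comm ((h a) : X) (a : X)] at t1
        rw [dist_comm (b : X) ((h b) : X)] at m2
        have := dist_comm (b:X) ((h b):X)
        nlinarith [dist_comm ((h b) : X) (b : X), hM b]
      have tri2 : dist (a : X) (b : X) ≤ dist ((h a) : X) ((h b) : X) + 2 * M := by
        have t1 := dist_triangle (a : X) ((h a) : X) (b : X)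
        have t2 := dist_triangle ((h a) : X) ((h b) : X) (b : X)
        nlinarith [hM a, hM b, dist_comm ((h b) : X) (b : X)]
      constructor
      · rw [div_le_iff₀ hK0, hda, hdh]
        have : 2 * M ≤ L * dist ((h a) : X) ((h b) : X) := by
          rw [← hLδ]
          have := hsepim
          rw [hdh] at this
          nlinarith
        nlinarith
      · rw [hda, hdh]
        have : 2 * M ≤ L * dist (a : X) (b : X) := by
          rw [← hLδ]
          have := hsepab
          rw [hda] at this
          nlinarith
        nlinarith
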